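/- ∑_{h=0}^{n} (number of partial Motzkin paths of length n ending at height h) · (h+1) = 3^n, where a partial Motzkin path is a word in {U,D,H} of length n all of whose prefixes have at least as many U's as D's, and it ends at height h = #U - #D. -/

import Mathlib

/-- A Motzkin step: up, down, or horizontal. -/
inductive Step | U | D | H
deriving DecidableEq

instance : Fintype Step :=
  ⟨{Step.U, Step.D, Step.H}, fun x => by cases x <;> simp⟩

/-- The height change of one step. -/
def Step.val : Step → ℤ
  | Step.U => 1
  | Step.D => -1
  | Step.H => 0

/-- The weight of a step: up steps weigh `1`, down steps `t`, horizontal steps `k`. -/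
def Step.wt (k t : ℕ) : Step → ℕ
  | Step.U => 1
  | Step.D => t
  | Step.H => k

/-- The height of the path `p` after its first `m` steps. -/
def pathHeight {n : ℕ} (p : Fin n → Step) (m : ℕ) : ℤ :=
  ∑ i ∈ Finset.univ.filter (fun i : Fin n => (i : ℕ) < m), (p i).val

/-- A partial Motzkin path: never goes below the x-axis. -/
def IsPartialMotzkin {n : ℕ} (p : Fin n → Step) : Prop :=
  ∀ m ≤ n, 0 ≤ pathHeight p m

/-- A (complete) Motzkin path: never below the x-axis and ends on the x-axis. -/
def IsMotzkin {n : ℕ} (p : Fin n → Step) : Prop :=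
  IsPartialMotzkin p ∧ pathHeight p n = 0

instance {n : ℕ} (p : Fin n → Step) : Decidable (IsPartialMotzkin p) :=
  Nat.decidableBallLE n _

instance {n : ℕ} (p : Fin n → Step) : Decidable (IsMotzkin p) :=
  inferInstanceAs (Decidable (_ ∧ _))

/-- The weight of a weighted Motzkin path. -/
def pathWt {n : ℕ} (k t : ℕ) (p : Fin n → Step) : ℕ := ∏ i, (p i).wt k t

/-- Sum of the weights of all `(k,t)`-Motzkin paths of length `n`. -/
def motzkinWt (k t n : ℕ) : ℕ :=
  ∑ p ∈ Finset.univ.filter (fun p : Fin n → Step => IsMotzkin p), pathWt k t p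

/-- Sum of the weights of all partial `(k,t)`-Motzkin paths of length `n`
ending at height `h`. -/
def partialWt (k t n h : ℕ) : ℕ :=
  ∑ p ∈ Finset.univ.filter
      (fun p : Fin n → Step => IsPartialMotzkin p ∧ pathHeight p n = (h : ℤ)),
    pathWt k t p

lemma pathHeight_snoc {n : ℕ} (p : Fin n → Step) (s : Step) (m : ℕ) :
    pathHeight (Fin.snoc p s) m = pathHeight p m + (if n < m then s.val else 0) := by
  unfold pathHeight
  rw [Finset.sum_filter, Finset.sum_filter, Fin.sum_univ_castSucc]
  simp

lemma pathHeight_stable {n : ℕ} (p : Fin n → Step) {m : ℕ} (h : n ≤ m) :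
    pathHeight p m = pathHeight p n := by
  unfold pathHeight
  congr 1
  apply Finset.filter_congr
  intro i _
  constructor
  · intro _; exact i.isLt
  · intro _; exact lt_of_lt_of_le i.isLt h

lemma pathHeight_le {n : ℕ} (p : Fin n → Step) : pathHeight p n ≤ n := by
  unfold pathHeight
  calc ∑ i ∈ Finset.univ.filter (fun i : Fin n => (i : ℕ) < n), (p i).val
      ≤ ∑ _i ∈ Finset.univ.filter (fun i : Fin n => (i : ℕ) < n), (1 : ℤ) := by
        apply Finset.sum_le_sum
        intro i _
        cases p i <;> simp [Step.val]
    _ ≤ n := by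
        rw [Finset.sum_const, nsmul_eq_mul, mul_one]
        have : (Finset.univ.filter (fun i : Fin n => (i : ℕ) < n)).card ≤ n := by
          exact le_trans (Finset.card_filter_le _ _) (by simp)
        exact_mod_cast this

lemma isPartialMotzkin_snoc {n : ℕ} (p : Fin n → Step) (s : Step) :
    IsPartialMotzkin (Fin.snoc p s) ↔
      IsPartialMotzkin p ∧ 0 ≤ pathHeight p n + s.val := by
  constructor
  · intro h
    refine ⟨fun m hm => ?_, ?_⟩
    · have := h m (le_trans hm (Nat.le_succ n))
      rwa [pathHeight_snoc, if_neg (not_lt.2 hm), add_zero] at this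
    · have := h (n + 1) le_rfl
      rwa [pathHeight_snoc, if_pos (Nat.lt_succ_self n),
        pathHeight_stable p (Nat.le_succ n)] at this
  · rintro ⟨h1, h2⟩ m hm
    rw [pathHeight_snoc]
    rcases Nat.lt_or_ge m (n + 1) with hc | hc
    · have hmn : m ≤ n := Nat.lt_succ_iff.mp hc
      rw [if_neg (not_lt.2 hmn), add_zero]
      exact h1 m hmn
    · have : m = n + 1 := le_antisymm hm hc
      subst this
      rwa [if_pos (Nat.lt_succ_self n), pathHeight_stable p (Nat.le_succ n)]

lemma step_univ : (Finset.univ : Finset Step) = {Step.U, Step.D, Step.H} := by decide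

lemma sum_step (f : Step → ℤ) : ∑ s : Step, f s = f .U + f .D + f .H := by
  rw [step_univ]
  rw [Finset.sum_insert (by decide), Finset.sum_insert (by decide), Finset.sum_singleton]
  ring

/-- `∑_{p partial Motzkin of length n} (final height + 1)`. -/
def F (n : ℕ) : ℤ :=
  ∑ p : Fin n → Step, if IsPartialMotzkin p then pathHeight p n + 1 else 0

lemma F_succ (n : ℕ) : F (n + 1) = 3 * F n := by
  have := Fintype.sum_equiv (Fin.snocEquiv (fun _ : Fin (n+1) => Step))
    (fun q => (fun q : Fin (n+1) → Step =>
      if IsPartialMotzkin q then pathHeight q (n+1) + 1 else 0) (Fin.snocEquiv _ q))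
    (fun q => if IsPartialMotzkin q then pathHeight q (n+1) + 1 else 0)
    (fun _ => rfl)
  rw [F, ← this, Fintype.sum_prod_type_right]
  rw [F, Finset.mul_sum]
  apply Finset.sum_congr rfl
  intro p _
  have hsnoc : ∀ s : Step, Fin.snocEquiv (fun _ : Fin (n+1) => Step) (s, p) = Fin.snoc p s :=
    fun s => rfl
  simp only [hsnoc]
  rw [sum_step]
  by_cases hp : IsPartialMotzkin p
  · have h0 : 0 ≤ pathHeight p n := hp n le_rfl
    have hU : pathHeight (Fin.snoc p Step.U) (n+1) = pathHeight p n + 1 := by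
      rw [pathHeight_snoc, if_pos (Nat.lt_succ_self n), pathHeight_stable p (Nat.le_succ n)]
      rfl
    have hD : pathHeight (Fin.snoc p Step.D) (n+1) = pathHeight p n + (-1) := by
      rw [pathHeight_snoc, if_pos (Nat.lt_succ_self n), pathHeight_stable p (Nat.le_succ n)]
      rfl
    have hH : pathHeight (Fin.snoc p Step.H) (n+1) = pathHeight p n + 0 := by
      rw [pathHeight_snoc, if_pos (Nat.lt_succ_self n), pathHeight_stable p (Nat.le_succ n)]
      rfl
    have eU : Step.U.val = 1 := rfl
    have eD : Step.D.val = -1 := rfl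
    have eH : Step.H.val = 0 := rfl
    simp only [isPartialMotzkin_snoc, hp, true_and, hU, hD, hH, eU, eD, eH, if_pos hp]
    split_ifs <;> omega
  · simp only [isPartialMotzkin_snoc, hp, false_and, if_false]
    ring

lemma F_eq (n : ℕ) : F n = 3 ^ n := by
  induction n with
  | zero =>
    have hpm : IsPartialMotzkin (default : Fin 0 → Step) := by
      intro m _; simp [pathHeight]
    have hh : pathHeight (default : Fin 0 → Step) 0 = 0 := by simp [pathHeight]
    simp [F, hpm, hh]
  | succ n ih =>
    rw [F_succ, ih]
    ring

/-- `∑_{h=0}^n #{partial Motzkin paths of length n ending at height h} · (h+1) = 3^n`. -/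
theorem stmt_13 (n : ℕ) :
    ∑ h ∈ Finset.range (n + 1),
        (Finset.univ.filter
          (fun p : Fin n → Step => IsPartialMotzkin p ∧ pathHeight p n = (h : ℤ))).card *
          (h + 1) =
      3 ^ n := by
  have key : (↑(∑ h ∈ Finset.range (n + 1),
        (Finset.univ.filter
          (fun p : Fin n → Step => IsPartialMotzkin p ∧ pathHeight p n = (h : ℤ))).card *
          (h + 1)) : ℤ) = F n := by
    push_cast
    rw [F, ← Finset.sum_filter]
    rw [← Finset.sum_fiberwise_of_maps_to (g := fun p : Fin n → Step => (pathHeight p n).toNat)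
      (t := Finset.range (n + 1)) ?_ (fun p => pathHeight p n + 1)]
    · apply Finset.sum_congr rfl
      intro h _
      have hset : Finset.filter (fun p : Fin n → Step => (pathHeight p n).toNat = h)
          (Finset.univ.filter (fun p => IsPartialMotzkin p)) =
          Finset.univ.filter (fun p : Fin n → Step =>
            IsPartialMotzkin p ∧ pathHeight p n = (h : ℤ)) := by
        rw [Finset.filter_filter]
        apply Finset.filter_congr
        intro p _
        constructor
        · rintro ⟨hp, ht⟩
          exact ⟨hp, by have := hp n le_rfl; omega⟩
        · rintro ⟨hp, ht⟩
          exact ⟨hp, by omega⟩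
      have hval : ∀ p ∈ Finset.univ.filter (fun p : Fin n → Step =>
          IsPartialMotzkin p ∧ pathHeight p n = (h : ℤ)),
          pathHeight p n + 1 = (h : ℤ) + 1 := by
        intro p hp
        simp only [Finset.mem_filter] at hp
        rw [hp.2.2]
      rw [hset, Finset.sum_congr rfl hval, Finset.sum_const, nsmul_eq_mul]
      try push_cast
      try ring
    · intro p hp
      simp only [Finset.mem_filter] at hp
      have h0 := hp.2 n le_rfl
      have h1 := pathHeight_le p
      simp only [Finset.mem_range]
      omega
  have hF := F_eq n
  rw [hF] at key
  exact_mod_cast key
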